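/- (Distinct discriminants for the free background, outside an exceptional discrete set.) Let w : ℝ → ℝ be a continuous, bounded, 1-periodic, non-negative function with ∫₀¹ w(s) ds > 0. For E ∈ ℝ and λ ∈ ℝ, let Φ_λ^E and Ψ_λ^E be the unique C² solutions of y''(x) + E y(x) = λ w(x) y(x) on ℝ with Φ_λ^E(0) = 1, (Φ_λ^E)'(0) = 0, Ψ_λ^E(0) = 0, (Ψ_λ^E)'(0) = 1, and define D_E(λ) := Φ_λ^E(1) + (Ψ_λ^E)'(1). Let S := {(kπ)² : k ∈ ℕ} (a set with no accumulation point). Then for all E₁, E₂ ∈ ℝ with E₁ ≠ E₂ such that not both E₁ ∈ S and E₂ ∈ S, there exists λ ∈ ℝ with |D_{E₁}(λ)| ≠ |D_{E₂}(λ)|. -/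

import Mathlib

open Real Set Filter Topology intervalIntegral

lemma gron (q r g g' : ℝ → ℝ) (K ε : ℝ) (hK : 1 ≤ K) (hε : 0 ≤ ε)
    (hg : ∀ x, HasDerivAt g (g' x) x)
    (hg' : ∀ x, HasDerivAt g' (q x * g x + r x) x)
    (hq : ∀ x ∈ Set.Icc (0:ℝ) 1, |q x| ≤ K)
    (hr : ∀ x ∈ Set.Icc (0:ℝ) 1, |r x| ≤ ε)
    (h0 : g 0 = 0) (h0' : g' 0 = 0) :
    |g 1| ≤ ε * Real.exp K ∧ |g' 1| ≤ ε * Real.exp K := by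
  set f : ℝ → ℝ × ℝ := fun x => (g x, g' x) with hf
  have hfd : ∀ x, HasDerivAt f (g' x, q x * g x + r x) x := fun x =>
    (hg x).prodMk (hg' x)
  have key : ∀ x ∈ Icc (0:ℝ) 1, ‖f x‖ ≤ gronwallBound 0 K ε (x - 0) := by
    apply norm_le_gronwallBound_of_norm_deriv_right_le
    · exact fun x _ => ((hfd x).continuousAt).continuousWithinAt
    · exact fun x _ => (hfd x).hasDerivWithinAt
    · simp [hf, h0, h0', Prod.norm_def]
    · intro x hx
      have hx' : x ∈ Icc (0:ℝ) 1 := ⟨hx.1, hx.2.le⟩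
      have h1 : ‖f x‖ = max |g x| |g' x| := by simp [hf, Prod.norm_def]
      have h2 : ‖(g' x, q x * g x + r x)‖ = max |g' x| |q x * g x + r x| := by
        simp [Prod.norm_def]
      rw [h2]
      have hga : |g x| ≤ ‖f x‖ := by rw [h1]; exact le_max_left _ _
      have hgb : |g' x| ≤ ‖f x‖ := by rw [h1]; exact le_max_right _ _
      have hfx : (0:ℝ) ≤ ‖f x‖ := norm_nonneg _
      apply max_le
      · nlinarith
      · calc |q x * g x + r x| ≤ |q x| * |g x| + |r x| := by
              rw [← abs_mul]; exact abs_add_le _ _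
          _ ≤ K * ‖f x‖ + ε := by
              have := hq x hx'; have := hr x hx'
              have : |q x| * |g x| ≤ K * ‖f x‖ := by
                apply mul_le_mul (hq x hx') hga (abs_nonneg _)
                linarith
              linarith [hr x hx']
  have hb := key 1 ⟨zero_le_one, le_refl 1⟩
  have hKne : K ≠ 0 := by linarith
  rw [gronwallBound_of_K_ne_0 hKne] at hb
  simp only [sub_zero, zero_mul, zero_add] at hb
  have hexp : ε / K * (Real.exp (K * 1) - 1) ≤ ε * Real.exp K := by
    rw [mul_one]
    have h1 : Real.exp K - 1 ≤ Real.exp K := by linarith [Real.exp_pos K]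
    have h2 : ε / K ≤ ε := by
      apply div_le_self hε hK
    have h3 : (0:ℝ) ≤ Real.exp K - 1 := by
      have := Real.one_le_exp (by linarith : (0:ℝ) ≤ K); linarith
    calc ε / K * (Real.exp K - 1) ≤ ε * (Real.exp K - 1) :=
          mul_le_mul_of_nonneg_right h2 h3
      _ ≤ ε * Real.exp K := by nlinarith [Real.exp_pos K]
  have hn : ‖f 1‖ ≤ ε * Real.exp K := le_trans hb hexp
  have h1 : ‖f 1‖ = max |g 1| |g' 1| := by simp [hf, Prod.norm_def]
  rw [h1] at hn
  exact ⟨le_trans (le_max_left _ _) hn, le_trans (le_max_right _ _) hn⟩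


lemma compare (w : ℝ → ℝ) (C E lam : ℝ) (hC : ∀ x, |w x| ≤ C) (hlam : |lam| ≤ 1)
    (y y' z z' r : ℝ → ℝ) (ε : ℝ) (hε : 0 ≤ ε)
    (hy : ∀ x, HasDerivAt y (y' x) x)
    (hy' : ∀ x, HasDerivAt y' ((lam * w x - E) * y x) x)
    (hz : ∀ x, HasDerivAt z (z' x) x)
    (hz' : ∀ x, HasDerivAt z' ((lam * w x - E) * z x + r x) x)
    (hr : ∀ x ∈ Set.Icc (0:ℝ) 1, |r x| ≤ ε)
    (h0 : y 0 = z 0) (h0' : y' 0 = z' 0) :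
    |y 1 - z 1| ≤ ε * Real.exp (1 + |E| + C) ∧
      |y' 1 - z' 1| ≤ ε * Real.exp (1 + |E| + C) := by
  have hC0 : 0 ≤ C := le_trans (abs_nonneg _) (hC 0)
  apply gron (fun x => lam * w x - E) (fun x => -r x) (fun x => y x - z x)
      (fun x => y' x - z' x) (1 + |E| + C) ε
  · linarith [abs_nonneg E]
  · exact hε
  · exact fun x => (hy x).sub (hz x)
  · intro x
    have := (hy' x).sub (hz' x)
    refine HasDerivAt.congr_deriv this (Eq.symm ?_)
    ring
  · intro x _
    calc |lam * w x - E| ≤ |lam * w x| + |E| := abs_sub _ _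
      _ ≤ 1 + |E| + C := by
          rw [abs_mul]
          have h1 : |lam| * |w x| ≤ 1 * C :=
            mul_le_mul hlam (hC x) (abs_nonneg _) zero_le_one
          linarith
  · intro x hx; rw [abs_neg]; exact hr x hx
  · rw [h0]; ring
  · rw [h0']; ring


lemma ftc (f : ℝ → ℝ) (hf : Continuous f) (x : ℝ) :
    HasDerivAt (fun u => ∫ s in (0:ℝ)..u, f s) (f x) x :=
  intervalIntegral.integral_hasDerivAt_right (hf.intervalIntegrable _ _)
    (hf.stronglyMeasurableAtFilter _ _) hf.continuousAt

lemma intbound (f : ℝ → ℝ) (C : ℝ) (hf : ∀ s, |f s| ≤ C) (x : ℝ) (hx : x ∈ Icc (0:ℝ) 1) :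
    |∫ s in (0:ℝ)..x, f s| ≤ C := by
  have h := intervalIntegral.norm_integral_le_of_norm_le_const
    (f := f) (a := (0:ℝ)) (b := x) (C := C) (fun s _ => hf s)
  rw [Real.norm_eq_abs] at h
  calc |∫ s in (0:ℝ)..x, f s| ≤ C * |x - 0| := h
    _ ≤ C := by
        have hC : 0 ≤ C := le_trans (abs_nonneg _) (hf 0)
        have : |x - 0| ≤ 1 := by rw [sub_zero, abs_of_nonneg hx.1]; exact hx.2
        nlinarith

lemma sol_derivs (f w : ℝ → ℝ) (E lam : ℝ) (hf : ContDiff ℝ 2 f)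
    (hode : ∀ x, deriv (deriv f) x + E * f x = lam * w x * f x) :
    (∀ x, HasDerivAt f (deriv f x) x) ∧
      (∀ x, HasDerivAt (deriv f) ((lam * w x - E) * f x) x) := by
  rw [show (2 : WithTop ℕ∞) = 1 + 1 from rfl, contDiff_succ_iff_deriv] at hf
  have hd1 : Differentiable ℝ f := hf.1
  have hd2 : Differentiable ℝ (deriv f) := hf.2.2.differentiable one_ne_zero
  refine ⟨fun x => (hd1 x).hasDerivAt, fun x => ?_⟩
  have := (hd2 x).hasDerivAt
  have hval : deriv (deriv f) x = (lam * w x - E) * f x := by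
    have := hode x; ring_nf; ring_nf at this ⊢; linarith
  rwa [hval] at this


lemma hasDerivAt_of_quad (f : ℝ → ℝ) (a d c₀ : ℝ) (hc₀ : 0 ≤ c₀)
    (h : ∀ lam : ℝ, |lam| ≤ 1 → |f lam - (a + lam * d)| ≤ lam ^ 2 * c₀) :
    f 0 = a ∧ HasDerivAt f d 0 := by
  have h0 : f 0 = a := by
    have := h 0 (by simp)
    simp only [abs_le] at this
    norm_num at this
    have h1 := this.1; have h2 := this.2
    linarith
  refine ⟨h0, ?_⟩
  rw [hasDerivAt_iff_tendsto_slope]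
  rw [Metric.tendsto_nhdsWithin_nhds]
  intro ε hε
  refine ⟨min 1 (ε / (c₀ + 1)), by positivity, fun {x} hx hdist => ?_⟩
  have hxne : x ≠ 0 := hx
  have hxabs : |x| < min 1 (ε / (c₀ + 1)) := by
    simpa [Real.dist_eq] using hdist
  have hx1 : |x| ≤ 1 := le_of_lt (lt_of_lt_of_le hxabs (min_le_left _ _))
  have hb := h x hx1
  have hslope : slope f 0 x = (f x - a) / x := by
    rw [slope_def_field, h0]; field_simp; ring
  rw [Real.dist_eq, hslope]
  have hxpos : 0 < |x| := abs_pos.mpr hxne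
  have : |(f x - a) / x - d| = |f x - (a + x * d)| / |x| := by
    rw [← abs_div]
    congr 1
    field_simp
    ring
  rw [this]
  have hle : |f x - (a + x * d)| / |x| ≤ |x| * c₀ := by
    rw [div_le_iff₀ hxpos]
    calc |f x - (a + x * d)| ≤ x ^ 2 * c₀ := hb
      _ = |x| * c₀ * |x| := by rw [← sq_abs]; ring
  have hlt : |x| * c₀ < ε := by
    have hx2 : |x| < ε / (c₀ + 1) := lt_of_lt_of_le hxabs (min_le_right _ _)
    have : |x| * (c₀ + 1) < ε := by
      rw [← lt_div_iff₀ (by positivity)]; exact hx2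
    nlinarith [abs_nonneg x]
  linarith


noncomputable def coefA (w : ℝ → ℝ) (k x : ℝ) : ℝ :=
  (1/k) * ∫ s in (0:ℝ)..x, w s * Real.cos (k*s)^2
noncomputable def coefB (w : ℝ → ℝ) (k x : ℝ) : ℝ :=
  (1/k) * ∫ s in (0:ℝ)..x, w s * (Real.cos (k*s) * Real.sin (k*s))
noncomputable def coefQ (w : ℝ → ℝ) (k x : ℝ) : ℝ :=
  (1/k) * ∫ s in (0:ℝ)..x, w s * Real.sin (k*s)^2

noncomputable def phi1 (w : ℝ → ℝ) (k x : ℝ) : ℝ :=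
  Real.sin (k*x) * coefA w k x - Real.cos (k*x) * coefB w k x
noncomputable def phi1d (w : ℝ → ℝ) (k x : ℝ) : ℝ :=
  k * (Real.cos (k*x) * coefA w k x + Real.sin (k*x) * coefB w k x)
noncomputable def psi1 (w : ℝ → ℝ) (k x : ℝ) : ℝ :=
  (1/k) * (Real.sin (k*x) * coefB w k x - Real.cos (k*x) * coefQ w k x)
noncomputable def psi1d (w : ℝ → ℝ) (k x : ℝ) : ℝ :=
  Real.cos (k*x) * coefB w k x + Real.sin (k*x) * coefQ w k x

lemma hasDerivAt_coefA (w : ℝ → ℝ) (k : ℝ) (hw : Continuous w) (x : ℝ) :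
    HasDerivAt (coefA w k) ((1/k) * (w x * Real.cos (k*x)^2)) x :=
  (ftc _ (by continuity) x).const_mul (1/k)

lemma hasDerivAt_coefB (w : ℝ → ℝ) (k : ℝ) (hw : Continuous w) (x : ℝ) :
    HasDerivAt (coefB w k) ((1/k) * (w x * (Real.cos (k*x) * Real.sin (k*x)))) x :=
  (ftc _ (by continuity) x).const_mul (1/k)

lemma hasDerivAt_coefQ (w : ℝ → ℝ) (k : ℝ) (hw : Continuous w) (x : ℝ) :
    HasDerivAt (coefQ w k) ((1/k) * (w x * Real.sin (k*x)^2)) x :=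
  (ftc _ (by continuity) x).const_mul (1/k)

lemma hasDerivAt_sin_k (k : ℝ) (x : ℝ) :
    HasDerivAt (fun x => Real.sin (k*x)) (k * Real.cos (k*x)) x := by
  have := ((hasDerivAt_id x).const_mul k).sin
  simpa [mul_comm] using this

lemma hasDerivAt_cos_k (k : ℝ) (x : ℝ) :
    HasDerivAt (fun x => Real.cos (k*x)) (-(k * Real.sin (k*x))) x := by
  have := ((hasDerivAt_id x).const_mul k).cos
  simpa [mul_comm] using this

lemma hasDerivAt_phi1 (w : ℝ → ℝ) (k : ℝ) (hw : Continuous w) (hk : k ≠ 0) (x : ℝ) :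
    HasDerivAt (phi1 w k) (phi1d w k x) x := by
  have h := ((hasDerivAt_sin_k k x).mul (hasDerivAt_coefA w k hw x)).sub
    ((hasDerivAt_cos_k k x).mul (hasDerivAt_coefB w k hw x))
  refine HasDerivAt.congr_deriv h (Eq.symm ?_)
  unfold phi1d
  field_simp
  ring

lemma hasDerivAt_phi1d (w : ℝ → ℝ) (k : ℝ) (hw : Continuous w) (hk : k ≠ 0) (x : ℝ) :
    HasDerivAt (phi1d w k) (-(k^2) * phi1 w k x + w x * Real.cos (k*x)) x := by
  have h := (((hasDerivAt_cos_k k x).mul (hasDerivAt_coefA w k hw x)).add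
    ((hasDerivAt_sin_k k x).mul (hasDerivAt_coefB w k hw x))).const_mul k
  refine HasDerivAt.congr_deriv h (Eq.symm ?_)
  unfold phi1
  have hpy := Real.sin_sq_add_cos_sq (k*x)
  field_simp
  linear_combination (-(w x * Real.cos (k*x))) * hpy

lemma hasDerivAt_psi1 (w : ℝ → ℝ) (k : ℝ) (hw : Continuous w) (hk : k ≠ 0) (x : ℝ) :
    HasDerivAt (psi1 w k) (psi1d w k x) x := by
  have h := (((hasDerivAt_sin_k k x).mul (hasDerivAt_coefB w k hw x)).sub
    ((hasDerivAt_cos_k k x).mul (hasDerivAt_coefQ w k hw x))).const_mul (1/k)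
  refine HasDerivAt.congr_deriv h (Eq.symm ?_)
  unfold psi1d
  field_simp
  ring

lemma hasDerivAt_psi1d (w : ℝ → ℝ) (k : ℝ) (hw : Continuous w) (hk : k ≠ 0) (x : ℝ) :
    HasDerivAt (psi1d w k)
      (-(k^2) * psi1 w k x + w x * Real.sin (k*x) / k) x := by
  have h := ((hasDerivAt_cos_k k x).mul (hasDerivAt_coefB w k hw x)).add
    ((hasDerivAt_sin_k k x).mul (hasDerivAt_coefQ w k hw x))
  refine HasDerivAt.congr_deriv h (Eq.symm ?_)
  unfold psi1
  have hpy := Real.sin_sq_add_cos_sq (k*x)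
  field_simp
  linear_combination (-(w x * Real.sin (k*x))) * hpy


lemma posE (w : ℝ → ℝ) (hw : Continuous w) (C : ℝ) (hC : ∀ x, |w x| ≤ C)
    (E : ℝ) (hE : 0 < E) (f g : ℝ → ℝ → ℝ)
    (hfs : ∀ lam, ContDiff ℝ 2 (f lam))
    (hfo : ∀ lam x, deriv (deriv (f lam)) x + E * f lam x = lam * w x * f lam x)
    (hf0 : ∀ lam, f lam 0 = 1) (hf'0 : ∀ lam, deriv (f lam) 0 = 0)
    (hgs : ∀ lam, ContDiff ℝ 2 (g lam))
    (hgo : ∀ lam x, deriv (deriv (g lam)) x + E * g lam x = lam * w x * g lam x)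
    (hg0 : ∀ lam, g lam 0 = 0) (hg'0 : ∀ lam, deriv (g lam) 0 = 1) :
    f 0 1 + deriv (g 0) 1 = 2 * Real.cos (Real.sqrt E) ∧
      HasDerivAt (fun lam => f lam 1 + deriv (g lam) 1)
        (Real.sin (Real.sqrt E) / Real.sqrt E * ∫ s in (0:ℝ)..1, w s) 0 := by
  have hC0 : 0 ≤ C := le_trans (abs_nonneg _) (hC 0)
  set k := Real.sqrt E with hkdef
  have hk : 0 < k := Real.sqrt_pos.mpr hE
  have hk2 : k^2 = E := Real.sq_sqrt hE.le
  have hkne : k ≠ 0 := ne_of_gt hk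
  -- bounds on coefficients
  have habs : ∀ s, |Real.sin (k*s)| ≤ 1 ∧ |Real.cos (k*s)| ≤ 1 := fun s =>
    ⟨Real.abs_sin_le_one _, Real.abs_cos_le_one _⟩
  have hbA : ∀ x ∈ Icc (0:ℝ) 1, |coefA w k x| ≤ C/k := by
    intro x hx
    unfold coefA
    rw [abs_mul, abs_of_pos (by positivity : (0:ℝ) < 1/k)]
    have := intbound (fun s => w s * Real.cos (k*s)^2) C (fun s => by
      have h1 := hC s; have h2 := Real.cos_sq_le_one (k*s)
      rw [abs_mul, abs_of_nonneg (sq_nonneg (Real.cos (k*s)))]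
      nlinarith [abs_nonneg (w s), sq_nonneg (Real.cos (k*s))]) x hx
    calc (1/k) * |∫ s in (0:ℝ)..x, w s * Real.cos (k*s)^2| ≤ (1/k) * C := by
          apply mul_le_mul_of_nonneg_left this (by positivity)
      _ = C/k := by ring
  have hbB : ∀ x ∈ Icc (0:ℝ) 1, |coefB w k x| ≤ C/k := by
    intro x hx
    unfold coefB
    rw [abs_mul, abs_of_pos (by positivity : (0:ℝ) < 1/k)]
    have := intbound (fun s => w s * (Real.cos (k*s) * Real.sin (k*s))) C (fun s => by
      have h1 := hC s; have h2 := (habs s).2; have h3 := (habs s).1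
      calc |w s * (Real.cos (k*s) * Real.sin (k*s))|
          = |w s| * (|Real.cos (k*s)| * |Real.sin (k*s)|) := by rw [abs_mul, abs_mul]
        _ ≤ C * (1 * 1) := by
            apply mul_le_mul h1 _ (by positivity) hC0
            exact mul_le_mul h2 h3 (abs_nonneg _) zero_le_one
        _ = C := by ring) x hx
    calc (1/k) * |∫ s in (0:ℝ)..x, w s * (Real.cos (k*s) * Real.sin (k*s))| ≤ (1/k) * C := by
          apply mul_le_mul_of_nonneg_left this (by positivity)
      _ = C/k := by ring
  have hbQ : ∀ x ∈ Icc (0:ℝ) 1, |coefQ w k x| ≤ C/k := by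
    intro x hx
    unfold coefQ
    rw [abs_mul, abs_of_pos (by positivity : (0:ℝ) < 1/k)]
    have := intbound (fun s => w s * Real.sin (k*s)^2) C (fun s => by
      have h1 := hC s; have h2 := Real.sin_sq_le_one (k*s)
      rw [abs_mul, abs_of_nonneg (sq_nonneg (Real.sin (k*s)))]
      nlinarith [abs_nonneg (w s), sq_nonneg (Real.sin (k*s))]) x hx
    calc (1/k) * |∫ s in (0:ℝ)..x, w s * Real.sin (k*s)^2| ≤ (1/k) * C := by
          apply mul_le_mul_of_nonneg_left this (by positivity)
      _ = C/k := by ring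
  have hbphi1 : ∀ x ∈ Icc (0:ℝ) 1, |phi1 w k x| ≤ 2*(C/k) := by
    intro x hx
    unfold phi1
    calc |Real.sin (k*x) * coefA w k x - Real.cos (k*x) * coefB w k x|
        ≤ |Real.sin (k*x) * coefA w k x| + |Real.cos (k*x) * coefB w k x| := abs_sub _ _
      _ ≤ 1 * (C/k) + 1 * (C/k) := by
          rw [abs_mul, abs_mul]
          have hCk : (0:ℝ) ≤ C/k := by positivity
          gcongr
          · exact (habs x).1
          · exact hbA x hx
          · exact (habs x).2
          · exact hbB x hx
      _ = 2*(C/k) := by ring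
  have hbpsi1 : ∀ x ∈ Icc (0:ℝ) 1, |psi1 w k x| ≤ (1/k)*(2*(C/k)) := by
    intro x hx
    unfold psi1
    rw [abs_mul, abs_of_pos (by positivity : (0:ℝ) < 1/k)]
    have : |Real.sin (k*x) * coefB w k x - Real.cos (k*x) * coefQ w k x| ≤ 2*(C/k) := by
      calc |Real.sin (k*x) * coefB w k x - Real.cos (k*x) * coefQ w k x|
          ≤ |Real.sin (k*x) * coefB w k x| + |Real.cos (k*x) * coefQ w k x| := abs_sub _ _
        _ ≤ 1 * (C/k) + 1 * (C/k) := by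
            rw [abs_mul, abs_mul]
            have hCk : (0:ℝ) ≤ C/k := by positivity
            gcongr
            · exact (habs x).1
            · exact hbB x hx
            · exact (habs x).2
            · exact hbQ x hx
        _ = 2*(C/k) := by ring
    exact mul_le_mul_of_nonneg_left this (by positivity)
  have hA0 : coefA w k 0 = 0 := by simp [coefA]
  have hB0 : coefB w k 0 = 0 := by simp [coefB]
  have hQ0 : coefQ w k 0 = 0 := by simp [coefQ]
  -- quadratic bound for Φ side
  set c₀ := C * (2*(C/k)) * Real.exp (1 + |E| + C) with hc₀def
  have hc₀ : 0 ≤ c₀ := by positivity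
  have hquadf : ∀ lam : ℝ, |lam| ≤ 1 →
      |f lam 1 - (Real.cos k + lam * phi1 w k 1)| ≤ lam^2 * c₀ := by
    intro lam hlam
    have hyd := sol_derivs (f lam) w E lam (hfs lam) (hfo lam)
    have hcmp := compare w C E lam hC hlam (f lam) (deriv (f lam))
      (fun x => Real.cos (k*x) + lam * phi1 w k x)
      (fun x => -(k * Real.sin (k*x)) + lam * phi1d w k x)
      (fun x => -(lam^2) * (w x * phi1 w k x))
      (lam^2 * (C * (2*(C/k)))) (by positivity)
      hyd.1 hyd.2
      (fun x => (hasDerivAt_cos_k k x).add ((hasDerivAt_phi1 w k hw hkne x).const_mul lam))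
      (fun x => by
        have h := (((hasDerivAt_sin_k k x).const_mul k).neg).add
          ((hasDerivAt_phi1d w k hw hkne x).const_mul lam)
        refine HasDerivAt.congr_deriv h (Eq.symm ?_)
        linear_combination (Real.cos (k*x) + lam * phi1 w k x) * hk2)
      (fun x hx => by
        rw [abs_mul, abs_mul, abs_neg, abs_pow, sq_abs]
        have h1 := hC x; have h2 := hbphi1 x hx
        have : |w x| * |phi1 w k x| ≤ C * (2*(C/k)) :=
          mul_le_mul h1 h2 (abs_nonneg _) hC0
        nlinarith [sq_nonneg lam]
        )
      (by rw [hf0]; simp [phi1, hA0, hB0])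
      (by rw [hf'0]; simp [phi1d, hA0, hB0])
    have := hcmp.1
    calc |f lam 1 - (Real.cos k + lam * phi1 w k 1)|
        = |f lam 1 - (Real.cos (k*1) + lam * phi1 w k 1)| := by rw [mul_one]
      _ ≤ lam^2 * (C * (2*(C/k))) * Real.exp (1 + |E| + C) := this
      _ = lam^2 * c₀ := by rw [hc₀def]; ring
  set c₁ := C * ((1/k)*(2*(C/k))) * Real.exp (1 + |E| + C) with hc₁def
  have hc₁ : 0 ≤ c₁ := by positivity
  have hquadg : ∀ lam : ℝ, |lam| ≤ 1 →
      |deriv (g lam) 1 - (Real.cos k + lam * psi1d w k 1)| ≤ lam^2 * c₁ := by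
    intro lam hlam
    have hyd := sol_derivs (g lam) w E lam (hgs lam) (hgo lam)
    have hcmp := compare w C E lam hC hlam (g lam) (deriv (g lam))
      (fun x => Real.sin (k*x)/k + lam * psi1 w k x)
      (fun x => Real.cos (k*x) + lam * psi1d w k x)
      (fun x => -(lam^2) * (w x * psi1 w k x))
      (lam^2 * (C * ((1/k)*(2*(C/k))))) (by positivity)
      hyd.1 hyd.2
      (fun x => by
        have h := ((hasDerivAt_sin_k k x).div_const k).add
          ((hasDerivAt_psi1 w k hw hkne x).const_mul lam)
        refine HasDerivAt.congr_deriv h (Eq.symm ?_)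
        field_simp)
      (fun x => by
        have h := (hasDerivAt_cos_k k x).add
          ((hasDerivAt_psi1d w k hw hkne x).const_mul lam)
        refine HasDerivAt.congr_deriv h (Eq.symm ?_)
        field_simp
        linear_combination (Real.sin (k*x) + lam * psi1 w k x * k) * hk2)
      (fun x hx => by
        rw [abs_mul, abs_mul, abs_neg, abs_pow, sq_abs]
        have h1 := hC x; have h2 := hbpsi1 x hx
        have : |w x| * |psi1 w k x| ≤ C * ((1/k)*(2*(C/k))) :=
          mul_le_mul h1 h2 (abs_nonneg _) hC0
        nlinarith [sq_nonneg lam]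
        )
      (by rw [hg0]; simp [psi1, hB0, hQ0])
      (by rw [hg'0]; simp [psi1d, hB0, hQ0])
    have := hcmp.2
    calc |deriv (g lam) 1 - (Real.cos k + lam * psi1d w k 1)|
        = |deriv (g lam) 1 - (Real.cos (k*1) + lam * psi1d w k 1)| := by rw [mul_one]
      _ ≤ lam^2 * (C * ((1/k)*(2*(C/k)))) * Real.exp (1 + |E| + C) := this
      _ = lam^2 * c₁ := by rw [hc₁def]; ring
  obtain ⟨hfval, hfder⟩ := hasDerivAt_of_quad (fun lam => f lam 1) (Real.cos k)
    (phi1 w k 1) c₀ hc₀ hquadf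
  obtain ⟨hgval, hgder⟩ := hasDerivAt_of_quad (fun lam => deriv (g lam) 1) (Real.cos k)
    (psi1d w k 1) c₁ hc₁ hquadg
  constructor
  · show f 0 1 + deriv (g 0) 1 = 2 * Real.cos k
    have h1 : f 0 1 = Real.cos k := hfval
    have h2 : deriv (g 0) 1 = Real.cos k := hgval
    rw [h1, h2]; ring
  · have hsum := hfder.add hgder
    have hck : Continuous fun s : ℝ => Real.cos (k*s) :=
      Real.continuous_cos.comp (continuous_const.mul continuous_id)
    have hsk : Continuous fun s : ℝ => Real.sin (k*s) :=
      Real.continuous_sin.comp (continuous_const.mul continuous_id)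
    have hintA : IntervalIntegrable (fun s => w s * Real.cos (k*s)^2)
        MeasureTheory.volume 0 1 := (hw.mul (hck.pow 2)).intervalIntegrable _ _
    have hintQ : IntervalIntegrable (fun s => w s * Real.sin (k*s)^2)
        MeasureTheory.volume 0 1 := (hw.mul (hsk.pow 2)).intervalIntegrable _ _
    have hiAQ : (∫ s in (0:ℝ)..1, w s * Real.cos (k*s)^2)
        + (∫ s in (0:ℝ)..1, w s * Real.sin (k*s)^2) = ∫ s in (0:ℝ)..1, w s := by
      rw [← intervalIntegral.integral_add hintA hintQ]
      apply intervalIntegral.integral_congr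
      intro s _
      simp only
      linear_combination (w s) * Real.sin_sq_add_cos_sq (k*s)
    refine HasDerivAt.congr_deriv hsum (Eq.symm ?_)
    show Real.sin k / k * (∫ s in (0:ℝ)..1, w s) = phi1 w k 1 + psi1d w k 1
    unfold phi1 psi1d coefA coefB coefQ
    simp only [mul_one]
    rw [← hiAQ]
    ring


lemma ident (w : ℝ → ℝ) (C E : ℝ) (hC : ∀ x, |w x| ≤ C)
    (y z z' : ℝ → ℝ) (hys : ContDiff ℝ 2 y)
    (hyo : ∀ x, deriv (deriv y) x + E * y x = 0 * w x * y x)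
    (hz : ∀ x, HasDerivAt z (z' x) x)
    (hz' : ∀ x, HasDerivAt z' (-E * z x) x)
    (h0 : y 0 = z 0) (h0' : deriv y 0 = z' 0) :
    y 1 = z 1 ∧ deriv y 1 = z' 1 := by
  have hyd := sol_derivs y w E 0 hys hyo
  have hcmp := compare w C E 0 hC (by simp) y (deriv y) z z' (fun _ => 0) 0 le_rfl
    hyd.1 hyd.2 hz
    (fun x => by
      have := hz' x
      convert this using 1
      ring)
    (fun x _ => by simp) h0 h0'
  constructor
  · have h := hcmp.1
    rw [zero_mul] at h
    have := abs_nonneg (y 1 - z 1)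
    have heq : |y 1 - z 1| = 0 := le_antisymm h this
    have := abs_eq_zero.mp heq
    linarith
  · have h := hcmp.2
    rw [zero_mul] at h
    have := abs_nonneg (deriv y 1 - z' 1)
    have heq : |deriv y 1 - z' 1| = 0 := le_antisymm h this
    have := abs_eq_zero.mp heq
    linarith

lemma negE (w : ℝ → ℝ) (C : ℝ) (hC : ∀ x, |w x| ≤ C) (E : ℝ) (hE : E < 0)
    (f g : ℝ → ℝ) (hfs : ContDiff ℝ 2 f)
    (hfo : ∀ x, deriv (deriv f) x + E * f x = 0 * w x * f x)
    (hf0 : f 0 = 1) (hf'0 : deriv f 0 = 0)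
    (hgs : ContDiff ℝ 2 g)
    (hgo : ∀ x, deriv (deriv g) x + E * g x = 0 * w x * g x)
    (hg0 : g 0 = 0) (hg'0 : deriv g 0 = 1) :
    f 1 + deriv g 1 = 2 * Real.cosh (Real.sqrt (-E)) := by
  set t := Real.sqrt (-E) with htdef
  have ht : 0 < t := Real.sqrt_pos.mpr (by linarith)
  have ht2 : t^2 = -E := Real.sq_sqrt (by linarith)
  have htne : t ≠ 0 := ne_of_gt ht
  have hcosh : ∀ x : ℝ, HasDerivAt (fun x => Real.cosh (t*x)) (t * Real.sinh (t*x)) x := by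
    intro x
    have := ((hasDerivAt_id x).const_mul t).cosh
    simpa [mul_comm] using this
  have hsinh : ∀ x : ℝ, HasDerivAt (fun x => t * Real.sinh (t*x)) (-E * Real.cosh (t*x)) x := by
    intro x
    have := (((hasDerivAt_id x).const_mul t).sinh).const_mul t
    refine HasDerivAt.congr_deriv this (Eq.symm ?_)
    simp only [id_eq]
    linear_combination (-Real.cosh (t*x)) * ht2
  have h1 := ident w C E hC f (fun x => Real.cosh (t*x)) (fun x => t * Real.sinh (t*x))
    hfs hfo hcosh hsinh (by simpa using hf0) (by simpa using hf'0)
  have hsinh2 : ∀ x : ℝ, HasDerivAt (fun x => Real.sinh (t*x) / t) (Real.cosh (t*x)) x := by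
    intro x
    have := (((hasDerivAt_id x).const_mul t).sinh).div_const t
    refine HasDerivAt.congr_deriv this (Eq.symm ?_)
    simp only [id_eq]
    field_simp
  have hcosh2 : ∀ x : ℝ, HasDerivAt (fun x => Real.cosh (t*x))
      (-E * (Real.sinh (t*x) / t)) x := by
    intro x
    have := ((hasDerivAt_id x).const_mul t).cosh
    refine HasDerivAt.congr_deriv this (Eq.symm ?_)
    simp only [id_eq]
    field_simp
    linear_combination (-Real.sinh (t*x)) * ht2
  have h2 := ident w C E hC g (fun x => Real.sinh (t*x) / t) (fun x => Real.cosh (t*x))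
    hgs hgo hsinh2 hcosh2 (by simpa using hg0) (by simpa using hg'0)
  rw [h1.1, h2.2]
  show Real.cosh (t*1) + Real.cosh (t*1) = 2 * Real.cosh t
  rw [mul_one]; ring

lemma zeroE (w : ℝ → ℝ) (C : ℝ) (hC : ∀ x, |w x| ≤ C)
    (f g : ℝ → ℝ) (hfs : ContDiff ℝ 2 f)
    (hfo : ∀ x, deriv (deriv f) x + 0 * f x = 0 * w x * f x)
    (hf0 : f 0 = 1) (hf'0 : deriv f 0 = 0)
    (hgs : ContDiff ℝ 2 g)
    (hgo : ∀ x, deriv (deriv g) x + 0 * g x = 0 * w x * g x)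
    (hg0 : g 0 = 0) (hg'0 : deriv g 0 = 1) :
    f 1 + deriv g 1 = 2 := by
  have h1 := ident w C 0 hC f (fun _ => 1) (fun _ => 0) hfs hfo
    (fun x => hasDerivAt_const x 1)
    (fun x => by simpa using hasDerivAt_const x (0:ℝ))
    (by simpa using hf0) (by simpa using hf'0)
  have h2 := ident w C 0 hC g (fun x => x) (fun _ => 1) hgs hgo
    (fun x => hasDerivAt_id x)
    (fun x => by simpa using hasDerivAt_const x (1:ℝ))
    (by simpa using hg0) (by simpa using hg'0)
  rw [h1.1, h2.2]
  norm_num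


lemma final (II : ℝ) (hI : 0 < II) (dd : ℝ → ℝ → ℝ)
    (hval_neg : ∀ E, E < 0 → dd E 0 = 2 * Real.cosh (Real.sqrt (-E)))
    (hval_zero : dd 0 0 = 2)
    (hval_pos : ∀ E, 0 < E → dd E 0 = 2 * Real.cos (Real.sqrt E))
    (hder : ∀ E, 0 < E → HasDerivAt (dd E) (Real.sin (Real.sqrt E) / Real.sqrt E * II) 0)
    (E₁ E₂ : ℝ) (hne : E₁ ≠ E₂) (hS1 : ∀ k : ℕ, E₁ ≠ ((k:ℝ)*Real.pi)^2)
    (H : ∀ lam, |dd E₁ lam| = |dd E₂ lam|) : False := by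
  have hE₁0 : E₁ ≠ 0 := fun h => hS1 0 (by simp [h])
  have H0 := H 0
  -- helper: |dd E 0| ≤ 2 cases for nonneg, > 2 for neg
  have habs_neg : ∀ E, E < 0 → 2 < |dd E 0| := by
    intro E hE
    rw [hval_neg E hE, abs_of_pos (by positivity)]
    have ht : Real.sqrt (-E) ≠ 0 := by
      have : 0 < Real.sqrt (-E) := Real.sqrt_pos.mpr (by linarith)
      exact ne_of_gt this
    have := Real.one_lt_cosh.mpr ht
    linarith
  have habs_pos : ∀ E, 0 < E → |dd E 0| ≤ 2 := by
    intro E hE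
    rw [hval_pos E hE, abs_mul]
    have := Real.abs_cos_le_one (Real.sqrt E)
    rw [abs_of_pos (by norm_num : (0:ℝ) < 2)]
    linarith
  rcases lt_trichotomy E₁ 0 with h1 | h1 | h1
  · -- E₁ < 0
    rcases lt_trichotomy E₂ 0 with h2 | h2 | h2
    · -- both negative: cosh equality forces E₁ = E₂
      rw [hval_neg E₁ h1, hval_neg E₂ h2] at H0
      rw [abs_of_pos (by positivity), abs_of_pos (by positivity)] at H0
      have hc : Real.cosh (Real.sqrt (-E₁)) = Real.cosh (Real.sqrt (-E₂)) := by linarith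
      have ht : Real.sqrt (-E₁) = Real.sqrt (-E₂) := by
        by_contra hne'
        rcases lt_or_gt_of_ne hne' with hlt | hgt
        · have : Real.cosh (Real.sqrt (-E₁)) < Real.cosh (Real.sqrt (-E₂)) := by
            rw [Real.cosh_lt_cosh, abs_of_nonneg (Real.sqrt_nonneg _),
              abs_of_nonneg (Real.sqrt_nonneg _)]
            exact hlt
          linarith
        · have : Real.cosh (Real.sqrt (-E₂)) < Real.cosh (Real.sqrt (-E₁)) := by
            rw [Real.cosh_lt_cosh, abs_of_nonneg (Real.sqrt_nonneg _),
              abs_of_nonneg (Real.sqrt_nonneg _)]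
            exact hgt
          linarith
      have : -E₁ = -E₂ := by
        have h1' := Real.sq_sqrt (by linarith : (0:ℝ) ≤ -E₁)
        have h2' := Real.sq_sqrt (by linarith : (0:ℝ) ≤ -E₂)
        rw [← h1', ← h2', ht]
      exact hne (by linarith)
    · subst h2
      rw [hval_zero] at H0
      have := habs_neg E₁ h1
      rw [H0] at this
      norm_num at this
    · have := habs_neg E₁ h1
      have := habs_pos E₂ h2
      linarith [H0.symm.le]
  · exact hE₁0 h1
  · -- E₁ > 0
    set k₁ := Real.sqrt E₁ with hk₁def
    have hk₁ : 0 < k₁ := Real.sqrt_pos.mpr h1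
    have hk₁2 : k₁^2 = E₁ := Real.sq_sqrt h1.le
    have hsin1 : Real.sin k₁ ≠ 0 := by
      intro hs
      obtain ⟨n, hn⟩ := Real.sin_eq_zero_iff.mp hs
      have hn0 : 0 < n := by
        by_contra hn0
        push_neg at hn0
        have : (n:ℝ) * Real.pi ≤ 0 := by
          apply mul_nonpos_of_nonpos_of_nonneg
          · exact_mod_cast hn0
          · exact Real.pi_pos.le
        linarith
      apply hS1 n.toNat
      rw [← hk₁2, ← hn]
      congr 2
      exact_mod_cast (Int.toNat_of_nonneg hn0.le).symm
    rcases lt_trichotomy E₂ 0 with h2 | h2 | h2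
    · have := habs_neg E₂ h2
      have := habs_pos E₁ h1
      linarith [H0.le]
    · subst h2
      rw [hval_zero, hval_pos E₁ h1] at H0
      have hcos2 : Real.cos k₁ ^ 2 = 1 := by
        have : |2 * Real.cos k₁| = 2 := by rw [H0]; norm_num
        have h4 : (2 * Real.cos k₁)^2 = 4 := by
          rw [← sq_abs, this]; norm_num
        nlinarith
      have := Real.sin_sq_add_cos_sq k₁
      have : Real.sin k₁ ^ 2 = 0 := by linarith
      exact hsin1 (pow_eq_zero_iff (by norm_num)|>.mp this)
    · -- both positive
      set k₂ := Real.sqrt E₂ with hk₂def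
      have hk₂ : 0 < k₂ := Real.sqrt_pos.mpr h2
      have hk₂2 : k₂^2 = E₂ := Real.sq_sqrt h2.le
      set c₁ := Real.sin k₁ / k₁ * II with hc₁def
      set c₂ := Real.sin k₂ / k₂ * II with hc₂def
      have hd1 := hder E₁ h1
      have hd2 := hder E₂ h2
      have hsq : ∀ lam, (dd E₁ lam)^2 = (dd E₂ lam)^2 := by
        intro lam
        rw [← sq_abs, H lam, sq_abs]
      have hdsq : (dd E₁ 0)^2 = (dd E₂ 0)^2 := hsq 0
      have hc2 : c₁^2 = c₂^2 := by
        by_cases hd : dd E₁ 0 = 0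
        · have hd' : dd E₂ 0 = 0 := by
            have := hdsq
            rw [hd] at this
            have : (dd E₂ 0)^2 = 0 := by linarith [this]
            exact pow_eq_zero_iff (by norm_num) |>.mp this
          have hs1 := hasDerivAt_iff_tendsto_slope.mp hd1
          have hs2 := hasDerivAt_iff_tendsto_slope.mp hd2
          have ht1 : Tendsto (fun l => (slope (dd E₁) 0 l)^2) (𝓝[≠] 0) (𝓝 (c₁^2)) :=
            hs1.pow 2
          have ht2 : Tendsto (fun l => (slope (dd E₂) 0 l)^2) (𝓝[≠] 0) (𝓝 (c₂^2)) :=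
            hs2.pow 2
          have heq : (fun l => (slope (dd E₁) 0 l)^2) = fun l => (slope (dd E₂) 0 l)^2 := by
            funext l
            simp only [slope_def_field, hd, hd', sub_zero, div_pow, hsq l]
          rw [heq] at ht1
          exact tendsto_nhds_unique ht1 ht2
        · have hd' : dd E₂ 0 ≠ 0 := by
            intro h
            rw [h] at hdsq
            exact hd (pow_eq_zero_iff (two_ne_zero) |>.mp (by linarith [hdsq]))
          have hG1 : HasDerivAt (fun l => (dd E₁ l)^2) (2 * dd E₁ 0 * c₁) 0 := by
            have := hd1.pow 2
            simp at this; exact this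
          have hG2 : HasDerivAt (fun l => (dd E₂ l)^2) (2 * dd E₂ 0 * c₂) 0 := by
            have := hd2.pow 2
            simp at this; exact this
          have heq : (fun l => (dd E₁ l)^2) = fun l => (dd E₂ l)^2 := funext hsq
          rw [heq] at hG1
          have hder_eq : 2 * dd E₁ 0 * c₁ = 2 * dd E₂ 0 * c₂ := hG1.unique hG2
          have hd2ne : (dd E₁ 0)^2 ≠ 0 := pow_ne_zero 2 hd
          have h2 : (2 * dd E₁ 0 * c₁)^2 = (2 * dd E₂ 0 * c₂)^2 := by rw [hder_eq]
          have h3 : (dd E₁ 0)^2 * c₁^2 = (dd E₁ 0)^2 * c₂^2 := by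
            linear_combination (1/4:ℝ) * h2 - c₂^2 * hdsq
          exact mul_left_cancel₀ hd2ne h3
      -- now extract trig identities
      have hcossq : Real.cos k₁ ^ 2 = Real.cos k₂ ^ 2 := by
        rw [hval_pos E₁ h1, hval_pos E₂ h2] at hdsq
        linear_combination (1/4:ℝ) * hdsq
      have hsinsq : Real.sin k₁ ^ 2 = Real.sin k₂ ^ 2 := by
        have p1 := Real.sin_sq_add_cos_sq k₁
        have p2 := Real.sin_sq_add_cos_sq k₂
        linarith
      have hc2' : Real.sin k₁^2 * k₂^2 = Real.sin k₂^2 * k₁^2 := by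
        rw [hc₁def, hc₂def] at hc2
        field_simp [ne_of_gt hk₁, ne_of_gt hk₂, ne_of_gt hI] at hc2
        apply mul_right_cancel₀ (pow_ne_zero 2 (ne_of_gt hI))
        linear_combination II^2 * hc2
      have hkk : k₁^2 = k₂^2 := by
        have hs2pos : Real.sin k₁ ^ 2 ≠ 0 := pow_ne_zero 2 hsin1
        apply mul_left_cancel₀ hs2pos
        calc Real.sin k₁^2 * k₁^2 = Real.sin k₂^2 * k₁^2 := by rw [hsinsq]
          _ = Real.sin k₁^2 * k₂^2 := hc2'.symm
      exact hne (by rw [← hk₁2, ← hk₂2, hkk])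


/-- Distinct discriminants for the free background, outside the exceptional set
`S = {(kπ)² : k ∈ ℕ}`: for the ODEs `y'' + E y = λ w y` with `w` continuous bounded
1-periodic non-negative of positive mean, if `E₁ ≠ E₂` and not both `E₁, E₂ ∈ S`,
then there exists `λ` with `|D_{E₁}(λ)| ≠ |D_{E₂}(λ)|`. -/
theorem stmt_12 (w : ℝ → ℝ)
    (hw_cont : Continuous w) (hw_bdd : ∃ C : ℝ, ∀ x, |w x| ≤ C)
    (hw_per : Function.Periodic w 1) (hw_nonneg : ∀ x, 0 ≤ w x)
    (hw_mean : 0 < ∫ s in (0 : ℝ)..1, w s)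
    (Φ Ψ : ℝ → ℝ → ℝ → ℝ)
    (hΦ_smooth : ∀ E lam, ContDiff ℝ 2 (Φ E lam))
    (hΦ_ode : ∀ E lam x,
      deriv (deriv (Φ E lam)) x + E * Φ E lam x = lam * w x * Φ E lam x)
    (hΦ0 : ∀ E lam, Φ E lam 0 = 1) (hΦ'0 : ∀ E lam, deriv (Φ E lam) 0 = 0)
    (hΨ_smooth : ∀ E lam, ContDiff ℝ 2 (Ψ E lam))
    (hΨ_ode : ∀ E lam x,
      deriv (deriv (Ψ E lam)) x + E * Ψ E lam x = lam * w x * Ψ E lam x)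
    (hΨ0 : ∀ E lam, Ψ E lam 0 = 0) (hΨ'0 : ∀ E lam, deriv (Ψ E lam) 0 = 1)
    (D : ℝ → ℝ → ℝ) (hD : ∀ E lam, D E lam = Φ E lam 1 + deriv (Ψ E lam) 1)
    (S : Set ℝ) (hS : S = {x : ℝ | ∃ k : ℕ, x = ((k : ℝ) * Real.pi) ^ 2})
    (E₁ E₂ : ℝ) (hne : E₁ ≠ E₂) (hnotS : ¬ (E₁ ∈ S ∧ E₂ ∈ S)) :
    ∃ lam : ℝ, |D E₁ lam| ≠ |D E₂ lam| := by
  obtain ⟨C, hC⟩ := hw_bdd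
  by_contra hcon
  push_neg at hcon
  have hval_neg : ∀ E, E < 0 → D E 0 = 2 * Real.cosh (Real.sqrt (-E)) := by
    intro E hE
    rw [hD E 0]
    exact negE w C hC E hE (Φ E 0) (Ψ E 0) (hΦ_smooth E 0) (hΦ_ode E 0)
      (hΦ0 E 0) (hΦ'0 E 0) (hΨ_smooth E 0) (hΨ_ode E 0) (hΨ0 E 0) (hΨ'0 E 0)
  have hval_zero : D 0 0 = 2 := by
    rw [hD 0 0]
    exact zeroE w C hC (Φ 0 0) (Ψ 0 0) (hΦ_smooth 0 0) (hΦ_ode 0 0)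
      (hΦ0 0 0) (hΦ'0 0 0) (hΨ_smooth 0 0) (hΨ_ode 0 0) (hΨ0 0 0) (hΨ'0 0 0)
  have hpos : ∀ E, 0 < E → (D E 0 = 2 * Real.cos (Real.sqrt E) ∧
      HasDerivAt (D E) (Real.sin (Real.sqrt E) / Real.sqrt E * ∫ s in (0:ℝ)..1, w s) 0) := by
    intro E hE
    have h := posE w hw_cont C hC E hE (Φ E) (Ψ E) (hΦ_smooth E) (hΦ_ode E)
      (hΦ0 E) (hΦ'0 E) (hΨ_smooth E) (hΨ_ode E) (hΨ0 E) (hΨ'0 E)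
    have hDeq : D E = fun lam => Φ E lam 1 + deriv (Ψ E lam) 1 := funext (hD E)
    constructor
    · rw [hD E 0]; exact h.1
    · rw [hDeq]; exact h.2
  have hval_pos : ∀ E, 0 < E → D E 0 = 2 * Real.cos (Real.sqrt E) :=
    fun E hE => (hpos E hE).1
  have hder : ∀ E, 0 < E → HasDerivAt (D E)
      (Real.sin (Real.sqrt E) / Real.sqrt E * ∫ s in (0:ℝ)..1, w s) 0 :=
    fun E hE => (hpos E hE).2
  rw [hS] at hnotS
  rcases not_and_or.mp hnotS with h | h
  · have hS1 : ∀ k : ℕ, E₁ ≠ ((k:ℝ) * Real.pi)^2 := by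
      intro k hk
      exact h ⟨k, hk⟩
    exact final _ hw_mean D hval_neg hval_zero hval_pos hder E₁ E₂ hne hS1 hcon
  · have hS2 : ∀ k : ℕ, E₂ ≠ ((k:ℝ) * Real.pi)^2 := by
      intro k hk
      exact h ⟨k, hk⟩
    exact final _ hw_mean D hval_neg hval_zero hval_pos hder E₂ E₁ hne.symm hS2
      (fun lam => (hcon lam).symm)
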